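/- Let f = Σ_{r=0}^n x_r^{d_1} g_r be a CW-Nagata polynomial of bidegree (d_1,d_2). For every i with 1 ≤ i ≤ d_1, the classes of X_0^i, X_1^i, …, X_n^i form a K-basis of A_{(i,0)}; in particular dim_K A_{(i,0)} = n+1. -/

import Mathlib

open MvPolynomial

namespace CW

variable {σ K : Type*} [CommSemiring K]

/-- A generic "monomial contraction-type" action of the polynomial ring on itself,
determined by a structure coefficient `ν c a` (the coefficient produced when the
operator monomial with exponent `a` acts on the monomial with exponent `c`). -/
noncomputable def genAct (ν : (σ →₀ ℕ) → (σ →₀ ℕ) → K) (α f : MvPolynomial σ K) :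
    MvPolynomial σ K :=
  Finsupp.sum (AddMonoidAlgebra.coeff α) fun a ca =>
    Finsupp.sum (AddMonoidAlgebra.coeff f) fun c cf => monomial (c - a) (ν c a * (ca * cf))

theorem genAct_zero_left (ν : (σ →₀ ℕ) → (σ →₀ ℕ) → K) (f : MvPolynomial σ K) :
    genAct ν 0 f = 0 :=
  Finsupp.sum_zero_index

theorem genAct_zero_right (ν : (σ →₀ ℕ) → (σ →₀ ℕ) → K) (α : MvPolynomial σ K) :
    genAct ν α 0 = 0 := by
  unfold genAct
  simp only [AddMonoidAlgebra.coeff_zero, Finsupp.sum_zero_index, Finsupp.sum,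
    Finsupp.support_zero, Finset.sum_empty, Finset.sum_const_zero]

theorem genAct_add_left (ν : (σ →₀ ℕ) → (σ →₀ ℕ) → K) (α β f : MvPolynomial σ K) :
    genAct ν (α + β) f = genAct ν α f + genAct ν β f := by
  unfold genAct
  apply Finsupp.sum_add_index'
  · intro a
    simp only [mul_zero, zero_mul, map_zero, Finsupp.sum, Finset.sum_const_zero]
  · intro a b₁ b₂
    rw [← Finsupp.sum_add]
    apply Finsupp.sum_congr
    intro c _
    rw [add_mul, mul_add, map_add]

theorem genAct_add_right (ν : (σ →₀ ℕ) → (σ →₀ ℕ) → K) (α f g : MvPolynomial σ K) :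
    genAct ν α (f + g) = genAct ν α f + genAct ν α g := by
  unfold genAct
  rw [← Finsupp.sum_add]
  apply Finsupp.sum_congr
  intro a _
  apply Finsupp.sum_add_index'
  · intro c
    simp only [mul_zero, map_zero]
  · intro c c₁ c₂
    rw [mul_add, mul_add, map_add]

theorem genAct_monomial (ν : (σ →₀ ℕ) → (σ →₀ ℕ) → K) (a c : σ →₀ ℕ) (r s : K) :
    genAct ν (monomial a r) (monomial c s) = monomial (c - a) (ν c a * (r * s)) := by
  unfold genAct
  rw [← single_eq_monomial a r, ← single_eq_monomial c s, AddMonoidAlgebra.coeff_single,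
    AddMonoidAlgebra.coeff_single]
  rw [Finsupp.sum_single_index, Finsupp.sum_single_index]
  · simp only [mul_zero, map_zero]
  · simp only [mul_zero, zero_mul, map_zero, Finsupp.sum, Finset.sum_const_zero]

theorem genAct_mul {ν : (σ →₀ ℕ) → (σ →₀ ℕ) → K}
    (hν : ∀ c a b, ν c (a + b) = ν c b * ν (c - b) a) (α β f : MvPolynomial σ K) :
    genAct ν (α * β) f = genAct ν α (genAct ν β f) := by
  induction α using MvPolynomial.induction_on' with
  | add p q hp hq => rw [add_mul, genAct_add_left, hp, hq, genAct_add_left]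
  | monomial a r =>
    induction β using MvPolynomial.induction_on' with
    | add p q hp hq =>
      rw [mul_add, genAct_add_left, hp, hq, ← genAct_add_right, genAct_add_left]
    | monomial b s =>
      induction f using MvPolynomial.induction_on' with
      | add p q hp hq =>
        rw [genAct_add_right, hp, hq, ← genAct_add_right, ← genAct_add_right]
      | monomial c t =>
        rw [monomial_mul, genAct_monomial, genAct_monomial, genAct_monomial,
          show c - (a + b) = c - b - a from by rw [tsub_tsub, add_comm], hν]
        congr 1
        ring

/-- The annihilator ideal of `f` under the action `genAct ν`. -/
noncomputable def annG (ν : (σ →₀ ℕ) → (σ →₀ ℕ) → K)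
    (hν : ∀ c a b, ν c (a + b) = ν c b * ν (c - b) a) (f : MvPolynomial σ K) :
    Ideal (MvPolynomial σ K) where
  carrier := {α | genAct ν α f = 0}
  zero_mem' := genAct_zero_left ν f
  add_mem' := by
    intro a b ha hb
    show genAct ν (a + b) f = 0
    rw [genAct_add_left, ha, hb, add_zero]
  smul_mem' := by
    intro c α hα
    show genAct ν (c * α) f = 0
    rw [genAct_mul hν, hα, genAct_zero_right]

/-- Structure coefficient of the contraction (apolarity) action: `X^a` sends `x^c`
to `x^(c-a)` if `a ≤ c` and to `0` otherwise. -/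
noncomputable def cnu (c a : σ →₀ ℕ) : K :=
  open scoped Classical in if a ≤ c then 1 else 0

theorem cnu_mul (c a b : σ →₀ ℕ) :
    (cnu c (a + b) : K) = cnu c b * cnu (c - b) a := by
  classical
  unfold cnu
  by_cases hb : b ≤ c
  · by_cases ha : a ≤ c - b
    · have h : a + b ≤ c := (le_tsub_iff_right hb).mp ha
      simp [hb, ha, h]
    · have h : ¬ a + b ≤ c := fun h => ha ((le_tsub_iff_right hb).mpr h)
      simp [hb, ha, h]
  · have h : ¬ a + b ≤ c := fun h => hb (le_trans le_add_self h)
    simp [hb, h]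

/-- The contraction action `α ∘ f`. -/
noncomputable def cAct (α f : MvPolynomial σ K) : MvPolynomial σ K :=
  genAct cnu α f

/-- The annihilator `Ann(f)` of `f` under the contraction action, as an ideal. -/
noncomputable def cAnn (f : MvPolynomial σ K) : Ideal (MvPolynomial σ K) :=
  annG cnu cnu_mul f

theorem mem_cAnn {f α : MvPolynomial σ K} : α ∈ cAnn f ↔ cAct α f = 0 := Iff.rfl

/-- The `K`-submodule of polynomials all of whose monomials satisfy `P`. -/
noncomputable def bihom (K : Type*) [CommSemiring K] {σ : Type*} (P : (σ →₀ ℕ) → Prop) :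
    Submodule K (MvPolynomial σ K) where
  carrier := {p | ∀ c ∈ p.support, P c}
  zero_mem' := by
    intro c hc
    simp at hc
  add_mem' := by
    classical
    intro p q hp hq c hc
    rcases Finset.mem_union.mp (MvPolynomial.support_add hc) with h | h
    · exact hp c h
    · exact hq c h
  smul_mem' := by
    intro k p hp c hc
    exact hp c (MvPolynomial.support_smul hc)

/-- The x-degree of an exponent vector. -/
def degX {n m : ℕ} (c : (Fin (n + 1) ⊕ Fin m) →₀ ℕ) : ℕ := ∑ r, c (Sum.inl r)

/-- The u-degree of an exponent vector. -/
def degU {n m : ℕ} (c : (Fin (n + 1) ⊕ Fin m) →₀ ℕ) : ℕ := ∑ k, c (Sum.inr k)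

/-- The bihomogeneous component `T_(i,j)`. -/
noncomputable def Tbi (K : Type*) [CommSemiring K] {n m : ℕ} (i j : ℕ) :
    Submodule K (MvPolynomial (Fin (n + 1) ⊕ Fin m) K) :=
  bihom K fun c => degX c = i ∧ degU c = j

/-- The bigraded component `A_(i,j)` of `A = T ⧸ Ann(f)`: the image of `T_(i,j)`
in the quotient. -/
noncomputable def Abi {K : Type*} [Field K] {n m : ℕ}
    (f : MvPolynomial (Fin (n + 1) ⊕ Fin m) K) (i j : ℕ) :
    Submodule K (MvPolynomial (Fin (n + 1) ⊕ Fin m) K ⧸ cAnn f) :=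
  (Tbi K i j).map (Ideal.Quotient.mkₐ K (cAnn f)).toLinearMap

section Aux2

theorem genAct_sum_left' {σ K : Type*} [CommSemiring K] (ν : (σ →₀ ℕ) → (σ →₀ ℕ) → K)
    {ι : Type*} (s : Finset ι) (h : ι → MvPolynomial σ K) (f : MvPolynomial σ K) :
    genAct ν (∑ r ∈ s, h r) f = ∑ r ∈ s, genAct ν (h r) f := by
  classical
  induction s using Finset.induction_on with
  | empty => simp [genAct_zero_left]
  | insert x s hx ih => rw [Finset.sum_insert hx, genAct_add_left, ih, Finset.sum_insert hx]

theorem genAct_sum_right' {σ K : Type*} [CommSemiring K] (ν : (σ →₀ ℕ) → (σ →₀ ℕ) → K)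
    {ι : Type*} (s : Finset ι) (h : ι → MvPolynomial σ K) (α : MvPolynomial σ K) :
    genAct ν α (∑ r ∈ s, h r) = ∑ r ∈ s, genAct ν α (h r) := by
  classical
  induction s using Finset.induction_on with
  | empty => simp [genAct_zero_right]
  | insert x s hx ih => rw [Finset.sum_insert hx, genAct_add_right, ih, Finset.sum_insert hx]

theorem cnu_eq_one' {σ K : Type*} [CommSemiring K] {c a : σ →₀ ℕ} (h : a ≤ c) :
    (cnu c a : K) = 1 := by
  classical
  simp [cnu, h]

theorem cnu_eq_zero' {σ K : Type*} [CommSemiring K] {c a : σ →₀ ℕ} (h : ¬ a ≤ c) :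
    (cnu c a : K) = 0 := by
  classical
  simp [cnu, h]

variable {n m : ℕ}

/-- Exponent vector of the `r`-th monomial of a CW-Nagata polynomial. -/
noncomputable def cvec (d₁ : ℕ) (g : Fin (n + 1) → (Fin m →₀ ℕ)) (r : Fin (n + 1)) :
    (Fin (n + 1) ⊕ Fin m) →₀ ℕ :=
  Finsupp.single (Sum.inl r) d₁ + (g r).mapDomain Sum.inr

theorem cvec_inl (d₁ : ℕ) (g : Fin (n + 1) → (Fin m →₀ ℕ)) (r s : Fin (n + 1)) :
    cvec d₁ g r (Sum.inl s) = if r = s then d₁ else 0 := by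
  rw [cvec, Finsupp.add_apply, Finsupp.mapDomain_notin_range _ _ (by simp),
    Finsupp.single_apply, add_zero]
  simp

theorem cvec_inr (d₁ : ℕ) (g : Fin (n + 1) → (Fin m →₀ ℕ)) (r : Fin (n + 1)) (k : Fin m) :
    cvec d₁ g r (Sum.inr k) = g r k := by
  rw [cvec, Finsupp.add_apply, Finsupp.single_apply,
    Finsupp.mapDomain_apply Sum.inr_injective]
  simp

theorem degX_single_inl (s : Fin (n + 1)) (i : ℕ) :
    degX (Finsupp.single (Sum.inl s) i : (Fin (n + 1) ⊕ Fin m) →₀ ℕ) = i := by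
  classical
  simp [degX, Finsupp.single_apply]

theorem degU_single_inl (s : Fin (n + 1)) (i : ℕ) :
    degU (Finsupp.single (Sum.inl s) i : (Fin (n + 1) ⊕ Fin m) →₀ ℕ) = 0 := by
  simp [degU, Finsupp.single_apply]

theorem le_cvec_iff {d₁ i : ℕ} (hid : i ≤ d₁) (g : Fin (n + 1) → (Fin m →₀ ℕ))
    (r : Fin (n + 1)) {a : (Fin (n + 1) ⊕ Fin m) →₀ ℕ}
    (haX : degX a = i) (haU : degU a = 0) :
    a ≤ cvec d₁ g r ↔ a = Finsupp.single (Sum.inl r) i := by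
  constructor
  · intro hle
    have hU : ∀ k, a (Sum.inr k) = 0 := by
      intro k
      exact (Finset.sum_eq_zero_iff.mp haU) k (Finset.mem_univ k)
    have hXo : ∀ t, t ≠ r → a (Sum.inl t) = 0 := by
      intro t ht
      have := hle (Sum.inl t)
      rw [cvec_inl, if_neg (fun h => ht h.symm)] at this
      omega
    have hXr : a (Sum.inl r) = i := by
      rw [← haX, degX, Finset.sum_eq_single r]
      · intro t _ ht
        exact hXo t ht
      · intro h
        exact absurd (Finset.mem_univ r) h
    ext z
    rcases z with t | k
    · rw [Finsupp.single_apply]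
      by_cases h : t = r
      · subst h; simp [hXr]
      · rw [if_neg (by simpa using fun hh => h hh.symm), hXo t h]
    · rw [hU k, Finsupp.single_apply, if_neg (by simp)]
  · rintro rfl
    intro z
    rcases z with t | k
    · rw [Finsupp.single_apply, cvec_inl]
      by_cases h : t = r
      · subst h; simp [hid]
      · rw [if_neg (by simpa using fun hh => h hh.symm), if_neg (fun hh => h hh.symm)]
    · rw [Finsupp.single_apply, if_neg (by simp)]
      exact Nat.zero_le _

end Aux2

theorem stmt_2 {K : Type*} [Field K] [CharZero K] (n m d₁ d₂ : ℕ)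
    (hd₁ : 1 ≤ d₁) (hd₂ : 2 ≤ d₂)
    (g : Fin (n + 1) → (Fin m →₀ ℕ))
    (hgdeg : ∀ r, (∑ k, g r k) = d₂)
    (hginj : Function.Injective g)
    (f : MvPolynomial (Fin (n + 1) ⊕ Fin m) K)
    (hf : f = ∑ r, MvPolynomial.X (Sum.inl r) ^ d₁ *
      MvPolynomial.monomial ((g r).mapDomain Sum.inr) 1)
    (i : ℕ) (hi : 1 ≤ i) (hid : i ≤ d₁) :
    (∃ b : Module.Basis (Fin (n + 1)) K (Abi f i 0),
      ∀ r, (b r : MvPolynomial (Fin (n + 1) ⊕ Fin m) K ⧸ cAnn f) =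
        Ideal.Quotient.mk (cAnn f) (MvPolynomial.X (Sum.inl r) ^ i)) ∧
    Module.finrank K (Abi f i 0) = n + 1 := by
  classical
  set e : Fin (n + 1) → ((Fin (n + 1) ⊕ Fin m) →₀ ℕ) :=
    fun r => Finsupp.single (Sum.inl r) i with he
  have hfm : f = ∑ r, monomial (cvec d₁ g r) (1 : K) := by
    rw [hf]
    refine Finset.sum_congr rfl fun r _ => ?_
    rw [X_pow_eq_monomial, monomial_mul, one_mul]
    rfl
  set v : Fin (n + 1) → (MvPolynomial (Fin (n + 1) ⊕ Fin m) K ⧸ cAnn f) :=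
    fun r => Ideal.Quotient.mk (cAnn f) (X (Sum.inl r) ^ i) with hv
  -- the basic computation of the action of a monomial on f
  have hact : ∀ (a : (Fin (n + 1) ⊕ Fin m) →₀ ℕ) (k : K),
      cAct (monomial a k) f = ∑ r, monomial (cvec d₁ g r - a) (cnu (cvec d₁ g r) a * k) := by
    intro a k
    rw [hfm, cAct, genAct_sum_right']
    refine Finset.sum_congr rfl fun r _ => ?_
    rw [genAct_monomial, mul_one]
  -- bad monomials annihilate f
  have hann : ∀ (c : (Fin (n + 1) ⊕ Fin m) →₀ ℕ) (k : K), degX c = i → degU c = 0 →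
      (∀ r, c ≠ e r) → monomial c k ∈ cAnn f := by
    intro c k hX hU hne
    rw [mem_cAnn, hact]
    refine Finset.sum_eq_zero fun r _ => ?_
    rw [cnu_eq_zero', zero_mul, monomial_zero]
    intro hle
    exact hne r ((le_cvec_iff hid g r hX hU).mp hle)
  -- X_r^i lies in T_(i,0)
  have hXmem : ∀ r, (X (Sum.inl r) ^ i : MvPolynomial (Fin (n + 1) ⊕ Fin m) K) ∈
      Tbi K i 0 := by
    intro r c hc
    rw [X_pow_eq_monomial, support_monomial, if_neg one_ne_zero, Finset.mem_singleton] at hc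
    subst hc
    exact ⟨degX_single_inl r i, degU_single_inl r i⟩
  have hsub : ∀ r, v r ∈ Abi f i 0 := fun r => ⟨_, hXmem r, rfl⟩
  -- smul identity in the quotient
  have hmk : ∀ (r : Fin (n + 1)) (k : K),
      Ideal.Quotient.mk (cAnn f) (monomial (e r) k) = k • v r := by
    intro r k
    rw [hv, ← Ideal.Quotient.mkₐ_eq_mk K, ← map_smul, X_pow_eq_monomial, smul_monomial,
      smul_eq_mul, mul_one]
  -- injectivity of r ↦ cvec r - e r
  have hinj : Function.Injective (fun s => cvec d₁ g s - e s) := by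
    intro s t h
    apply hginj
    ext k
    have h2 := DFunLike.congr_fun h (Sum.inr k)
    simpa [Finsupp.tsub_apply, cvec_inr, he, Finsupp.single_apply] using h2
  -- linear independence of the classes
  have hli : LinearIndependent K v := by
    rw [Fintype.linearIndependent_iff]
    intro c hc r
    have hp : (∑ s, monomial (e s) (c s) : MvPolynomial (Fin (n + 1) ⊕ Fin m) K) ∈ cAnn f := by
      rw [← Ideal.Quotient.eq_zero_iff_mem, map_sum, ← hc]
      exact Finset.sum_congr rfl fun s _ => hmk s (c s)
    rw [mem_cAnn, cAct, genAct_sum_left'] at hp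
    have hp2 : (∑ s, monomial (cvec d₁ g s - e s) (c s) :
        MvPolynomial (Fin (n + 1) ⊕ Fin m) K) = 0 := by
      rw [← hp]
      refine Finset.sum_congr rfl fun s _ => ?_
      rw [show genAct cnu (monomial (e s) (c s)) f = cAct (monomial (e s) (c s)) f from rfl,
        hact]
      rw [Finset.sum_eq_single s]
      · rw [cnu_eq_one' ((le_cvec_iff hid g s (degX_single_inl s i)
          (degU_single_inl s i)).mpr rfl), one_mul]
      · intro t _ hts
        rw [cnu_eq_zero', zero_mul, monomial_zero]
        intro hle
        have h3 := (le_cvec_iff hid g t (degX_single_inl s i) (degU_single_inl s i)).mp hle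
        exact hts (Sum.inl.inj ((Finsupp.single_left_inj (show i ≠ 0 by omega)).mp h3.symm))
      · intro h; exact absurd (Finset.mem_univ s) h
    have h4 := congrArg (coeff (cvec d₁ g r - e r)) hp2
    rw [MvPolynomial.coeff_sum, Finset.sum_eq_single r] at h4
    · rwa [coeff_monomial, if_pos rfl, coeff_zero] at h4
    · intro t _ htr
      rw [coeff_monomial, if_neg (fun h => htr (hinj h))]
    · intro h; exact absurd (Finset.mem_univ r) h
  -- spanning
  have hspan : Abi f i 0 = Submodule.span K (Set.range v) := by
    apply le_antisymm
    · rintro _ ⟨p, hp, rfl⟩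
      show (Ideal.Quotient.mkₐ K (cAnn f)).toLinearMap p ∈ _
      rw [p.as_sum, map_sum]
      refine Submodule.sum_mem _ fun c hc => ?_
      obtain ⟨hX, hU⟩ := hp c hc
      by_cases hce : ∃ r, c = e r
      · obtain ⟨r, rfl⟩ := hce
        have h5 : (Ideal.Quotient.mkₐ K (cAnn f)).toLinearMap (monomial (e r) (coeff (e r) p))
            = coeff (e r) p • v r := hmk r _
        rw [h5]
        exact Submodule.smul_mem _ _ (Submodule.subset_span ⟨r, rfl⟩)
      · push_neg at hce
        have h5 : (Ideal.Quotient.mkₐ K (cAnn f)).toLinearMap (monomial c (coeff c p)) = 0 :=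
          Ideal.Quotient.eq_zero_iff_mem.mpr (hann c _ hX hU hce)
        rw [h5]
        exact Submodule.zero_mem _
    · rw [Submodule.span_le]
      rintro _ ⟨r, rfl⟩
      exact hsub r
  let b : Module.Basis (Fin (n + 1)) K (Abi f i 0) :=
    (Module.Basis.span hli).map (LinearEquiv.ofEq _ _ hspan.symm)
  have hb : ∀ r, (b r : MvPolynomial (Fin (n + 1) ⊕ Fin m) K ⧸ cAnn f) =
      Ideal.Quotient.mk (cAnn f) (X (Sum.inl r) ^ i) := by
    intro r
    show ((LinearEquiv.ofEq _ _ hspan.symm) ((Module.Basis.span hli) r) :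
      MvPolynomial (Fin (n + 1) ⊕ Fin m) K ⧸ cAnn f) = _
    rw [LinearEquiv.coe_ofEq_apply, Module.Basis.span_apply]
  exact ⟨⟨b, hb⟩, by rw [Module.finrank_eq_card_basis b, Fintype.card_fin]⟩

end CW
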